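/- For every L-formula θ(u, w₁,…,w_k) and every tuple c̄ ∈ (ℕ⁺)^k, there exists a squarefree r ∈ ℕ⁺ such that either (i) for every prime p: p divides r if and only if ℕ⁺ ⊨ θ(p, c̄), or (ii) for every prime p: p divides r if and only if ℕ⁺ ⊭ θ(p, c̄). -/

import Mathlib

open FirstOrder Language

/-- The language `L` with one binary function symbol `·` and one constant symbol `1`. -/
def L : FirstOrder.Language :=
  ⟨fun n => match n with | 0 => Unit | 2 => Unit | _ => Empty, fun _ => Empty⟩

/-- Any monoid is an `L`-structure, with `·` interpreted as multiplication and `1` as the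
identity. In particular `ℕ+` is the standard model of Skolem arithmetic, and
`Multiplicative ℕ` is the additive `L`-structure `(ℕ, +, 0)`. -/
instance (M : Type*) [Monoid M] : L.Structure M where
  funMap {n} f x :=
    match n, f, x with
    | 0, _, _ => 1
    | 2, _, x => x 0 * x 1
  RelMap r _ := r.elim

/-- A `MulEquiv` of monoids is an `L`-equivalence. -/
def MulEquiv.toLEquiv {M N : Type*} [Monoid M] [Monoid N] (e : M ≃* N) : M ≃[L] N where
  toEquiv := e.toEquiv
  map_fun' := fun {n} f x => by
    match n, f with
    | 0, _ => exact map_one e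
    | 2, _ => exact map_mul e _ _
  map_rel' := fun {n} r x => r.elim

section swap

variable {p q : ℕ} (hp : p.Prime) (hq : q.Prime)

/-- The function on `ℕ` swapping the exponents of primes `p` and `q`. -/
noncomputable def swapFun (p q : ℕ) (n : ℕ) : ℕ :=
  (n.factorization.equivMapDomain (Equiv.swap p q)).prod (· ^ ·)

include hp hq

lemma swap_prime {m : ℕ} (hm : m.Prime) : (Equiv.swap p q m).Prime := by
  rcases eq_or_ne m p with rfl | h1
  · simpa [Equiv.swap_apply_left]
  rcases eq_or_ne m q with rfl | h2
  · simpa [Equiv.swap_apply_right]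
  · rwa [Equiv.swap_apply_of_ne_of_ne h1 h2]

lemma swapFun_support_prime {n : ℕ} :
    ∀ ℓ ∈ (n.factorization.equivMapDomain (Equiv.swap p q)).support, Nat.Prime ℓ := by
  intro ℓ hℓ
  rw [Finsupp.mem_support_iff, Finsupp.equivMapDomain_apply, ← Finsupp.mem_support_iff,
    Nat.support_factorization] at hℓ
  have := swap_prime hp hq (Nat.prime_of_mem_primeFactors hℓ)
  simpa [Equiv.symm_swap, Equiv.swap_apply_self] using this

lemma swapFun_pos (n : ℕ) : 0 < swapFun p q n := by
  rw [swapFun, Finsupp.prod]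
  exact Finset.prod_pos fun ℓ hℓ => pow_pos (swapFun_support_prime hp hq ℓ hℓ).pos _

lemma factorization_swapFun (n : ℕ) :
    (swapFun p q n).factorization = n.factorization.equivMapDomain (Equiv.swap p q) :=
  Nat.prod_pow_factorization_eq_self (swapFun_support_prime hp hq)

lemma swapFun_swapFun (n : ℕ) (hn : n ≠ 0) : swapFun p q (swapFun p q n) = n := by
  have : (swapFun p q (swapFun p q n)).factorization = n.factorization := by
    rw [factorization_swapFun hp hq, factorization_swapFun hp hq,
      ← Finsupp.equivMapDomain_trans, Equiv.swap_swap, Finsupp.equivMapDomain_refl]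
  have h2 : swapFun p q (swapFun p q n) ≠ 0 := (swapFun_pos hp hq _).ne'
  exact Nat.eq_of_factorization_eq h2 hn fun r => by rw [this]

omit hp hq in
lemma swapFun_mul (m n : ℕ) (hm : m ≠ 0) (hn : n ≠ 0) :
    swapFun p q (m * n) = swapFun p q m * swapFun p q n := by
  rw [swapFun, swapFun, swapFun, Nat.factorization_mul hm hn]
  have : (m.factorization + n.factorization).equivMapDomain (Equiv.swap p q)
      = m.factorization.equivMapDomain (Equiv.swap p q)
        + n.factorization.equivMapDomain (Equiv.swap p q) := by
    ext x; simp [Finsupp.equivMapDomain_apply]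
  rw [this, Finsupp.prod_add_index' (fun a => pow_zero a) (fun a b₁ b₂ => pow_add a b₁ b₂)]

omit hp hq in
lemma swapFun_one : swapFun p q 1 = 1 := by
  simp [swapFun]

lemma prime_dvd_swapFun {ℓ n : ℕ} (hℓ : ℓ.Prime) (hn : n ≠ 0) :
    ℓ ∣ swapFun p q n ↔ Equiv.swap p q ℓ ∣ n := by
  have h0 : swapFun p q n ≠ 0 := (swapFun_pos hp hq n).ne'
  rw [hℓ.dvd_iff_one_le_factorization h0, factorization_swapFun hp hq,
    Finsupp.equivMapDomain_apply, Equiv.symm_swap,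
    ← (swap_prime hp hq hℓ).dvd_iff_one_le_factorization hn]

lemma swapFun_eq_self {n : ℕ} (hn : n ≠ 0) (hpn : ¬ p ∣ n) (hqn : ¬ q ∣ n) :
    swapFun p q n = n := by
  have : n.factorization.equivMapDomain (Equiv.swap p q) = n.factorization := by
    ext x
    rw [Finsupp.equivMapDomain_apply, Equiv.symm_swap]
    rcases eq_or_ne x p with rfl | h1
    · rw [Equiv.swap_apply_left, Nat.factorization_eq_zero_of_not_dvd hqn,
        Nat.factorization_eq_zero_of_not_dvd hpn]
    rcases eq_or_ne x q with rfl | h2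
    · rw [Equiv.swap_apply_right, Nat.factorization_eq_zero_of_not_dvd hqn,
        Nat.factorization_eq_zero_of_not_dvd hpn]
    · rw [Equiv.swap_apply_of_ne_of_ne h1 h2]
  rw [swapFun, this, Nat.factorization_prod_pow_eq_self hn]

end swap

lemma swapFun_left {p q : ℕ} (hp : p.Prime) (hq : q.Prime) : swapFun p q p = q := by
  rw [swapFun, hp.factorization, Finsupp.equivMapDomain_single, Equiv.swap_apply_left,
    Finsupp.prod_single_index (pow_zero q), pow_one]

/-- The automorphism of `ℕ+` swapping the primes `p` and `q`. -/
noncomputable def swapPEquiv {p q : ℕ} (hp : p.Prime) (hq : q.Prime) : ℕ+ ≃* ℕ+ where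
  toFun n := ⟨swapFun p q n, swapFun_pos hp hq n⟩
  invFun n := ⟨swapFun p q n, swapFun_pos hp hq n⟩
  left_inv n := Subtype.ext (swapFun_swapFun hp hq _ n.pos.ne')
  right_inv n := Subtype.ext (swapFun_swapFun hp hq _ n.pos.ne')
  map_mul' m n := Subtype.ext (by
    exact swapFun_mul (p := p) (q := q) m n m.pos.ne' n.pos.ne')

lemma realize_swap_invariant {k : ℕ} (θ : L.Formula (Unit ⊕ Fin k)) (c : Fin k → ℕ+)
    (p q : ℕ+) (hp : (p : ℕ).Prime) (hq : (q : ℕ).Prime)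
    (hpc : ∀ i, ¬ (p : ℕ) ∣ (c i : ℕ)) (hqc : ∀ i, ¬ (q : ℕ) ∣ (c i : ℕ)) :
    (θ.Realize (Sum.elim (fun _ => p) c) ↔ θ.Realize (Sum.elim (fun _ => q) c)) := by
  let g : ℕ+ ≃[L] ℕ+ := (swapPEquiv hp hq).toLEquiv
  have h := StrongHomClass.realize_formula g θ (v := Sum.elim (fun _ => p) c)
  have hg : (⇑g ∘ Sum.elim (fun _ => p) c : Unit ⊕ Fin k → ℕ+) = Sum.elim (fun _ => q) c := by
    funext x
    cases x with
    | inl _ =>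
        show (⟨swapFun p q p, _⟩ : ℕ+) = q
        exact Subtype.ext (swapFun_left hp hq)
    | inr i =>
        show (⟨swapFun p q (c i), _⟩ : ℕ+) = c i
        exact Subtype.ext (swapFun_eq_self hp hq (c i).pos.ne' (hpc i) (hqc i))
  rw [hg] at h
  exact h.symm

lemma coding (T : Finset ℕ) (hT : ∀ p ∈ T, Nat.Prime p) :
    ∃ r : ℕ+, (∀ p : ℕ+, (p : ℕ).Prime → ¬ p * p ∣ r) ∧
      ∀ p : ℕ+, (p : ℕ).Prime → (p ∣ r ↔ (p : ℕ) ∈ T) := by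
  refine ⟨⟨∏ m ∈ T, m, Finset.prod_pos fun m hm => (hT m hm).pos⟩, ?_, ?_⟩ <;>
  · intro p hp
    have hne : (∏ m ∈ T, m) ≠ 0 := (Finset.prod_pos fun m hm => (hT m hm).pos).ne'
    have hfact : (∏ m ∈ T, m).factorization = ∑ m ∈ T, Finsupp.single m 1 := by
      rw [Nat.factorization_prod fun m hm => (hT m hm).pos.ne']
      exact Finset.sum_congr rfl fun m hm => (hT m hm).factorization
    have hval : (∏ m ∈ T, m).factorization (p : ℕ) = if (p : ℕ) ∈ T then 1 else 0 := by
      rw [hfact, Finsupp.finset_sum_apply]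
      simp [Finsupp.single_apply]
    first
    | · intro hdvd
        erw [PNat.dvd_iff, PNat.mul_coe, PNat.mk_coe, ← sq,
          hp.pow_dvd_iff_le_factorization hne, hval] at hdvd
        split at hdvd <;> omega
    | · erw [PNat.dvd_iff, PNat.mk_coe, hp.dvd_iff_one_le_factorization hne, hval]
        split <;> simp_all <;> assumption

/-- Every parameter-definable set of primes, or its complement, is the set of prime
divisors of a squarefree element. -/
theorem radical_coding (k : ℕ) (θ : L.Formula (Unit ⊕ Fin k)) (c : Fin k → ℕ+) :
    ∃ r : ℕ+, (∀ p : ℕ+, (p : ℕ).Prime → ¬ p * p ∣ r) ∧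
      ((∀ p : ℕ+, (p : ℕ).Prime → (p ∣ r ↔ θ.Realize (Sum.elim (fun _ => p) c))) ∨
        (∀ p : ℕ+, (p : ℕ).Prime → (p ∣ r ↔ ¬ θ.Realize (Sum.elim (fun _ => p) c)))) := by
  classical
  set P : Finset ℕ := (∏ i, (c i : ℕ)).primeFactors with hP
  have hprod : (∏ i, (c i : ℕ)) ≠ 0 :=
    Finset.prod_ne_zero_iff.mpr fun i _ => (c i).pos.ne'
  have hnotinP : ∀ p : ℕ+, (p : ℕ).Prime → (p : ℕ) ∉ P → ∀ i, ¬ (p : ℕ) ∣ (c i : ℕ) := by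
    intro p hp hPp i hdvd
    exact hPp (Nat.mem_primeFactors.mpr
      ⟨hp, hdvd.trans (Finset.dvd_prod_of_mem _ (Finset.mem_univ i)), hprod⟩)
  let Φ : ℕ → Prop := fun m => ∀ h : 0 < m, θ.Realize (Sum.elim (fun _ => (⟨m, h⟩ : ℕ+)) c)
  have hΦ : ∀ p : ℕ+, Φ (p : ℕ) ↔ θ.Realize (Sum.elim (fun _ => p) c) :=
    fun p => ⟨fun h => h p.pos, fun h _ => h⟩
  by_cases hex : ∃ q : ℕ+, (q : ℕ).Prime ∧ (q : ℕ) ∉ P ∧ ¬ θ.Realize (Sum.elim (fun _ => q) c)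
  · obtain ⟨q, hq, hqP, hqθ⟩ := hex
    obtain ⟨r, hsf, hdvd⟩ := coding (P.filter Φ)
      (fun m hm => Nat.prime_of_mem_primeFactors (Finset.mem_filter.mp hm).1)
    refine ⟨r, hsf, Or.inl fun p hp => ?_⟩
    rw [hdvd p hp, Finset.mem_filter]
    constructor
    · rintro ⟨-, h⟩; exact (hΦ p).mp h
    · intro h
      refine ⟨?_, (hΦ p).mpr h⟩
      by_contra hpP
      exact hqθ ((realize_swap_invariant θ c p q hp hq
        (hnotinP p hp hpP) (hnotinP q hq hqP)).mp h)
  · push_neg at hex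
    obtain ⟨r, hsf, hdvd⟩ := coding (P.filter fun m => ¬ Φ m)
      (fun m hm => Nat.prime_of_mem_primeFactors (Finset.mem_filter.mp hm).1)
    refine ⟨r, hsf, Or.inr fun p hp => ?_⟩
    rw [hdvd p hp, Finset.mem_filter]
    constructor
    · rintro ⟨-, h⟩ hθ; exact h ((hΦ p).mpr hθ)
    · intro h
      have hpP : (p : ℕ) ∈ P := by
        by_contra hpP
        exact h (hex p hp hpP)
      exact ⟨hpP, fun hΦp => h ((hΦ p).mp hΦp)⟩
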